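/- Let M(S) be a rank-r matroid on an n-element linearly ordered set S. If v ≤ w_{M(S)} in W(n,r), then λ_M(σ_{A,B}) = v, where A = π(w_{M(S)}), B = π(v), and σ_{A,B} is the shuffle. -/

import Mathlib

open Matroid Set

/-- The rank of a set `X` in a matroid `M`: the largest cardinality of an independent
subset of `X`. -/
noncomputable def matRk {α : Type*} (M : Matroid α) (X : Set α) : ℕ :=
  sSup {k : ℕ | ∃ I : Set α, I ⊆ X ∧ M.Indep I ∧ I.ncard = k}

/-- The set of positions of the ones of a 0-1 word of length `n`. -/
def ones {n : ℕ} (v : Fin n → Bool) : Finset (Fin n) :=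
  Finset.univ.filter (fun i => v i = true)

/-- The order on `W(n,r)`: `v ≤ w` iff `π_k(v) ≤ π_k(w)` for all `k`, where `π_k`
is the position of the `k`-th one. -/
def wordLE {n : ℕ} (v w : Fin n → Bool) : Prop :=
  (ones v).card = (ones w).card ∧
  ∀ (k : ℕ) (hv : k < (ones v).card) (hw : k < (ones w).card),
    (ones v).orderEmbOfFin rfl ⟨k, hv⟩ ≤ (ones w).orderEmbOfFin rfl ⟨k, hw⟩

/-- `λ_M(σ) = w_{M(S_σ)}`: the word of a matroid `M` on `Fin n` relative to the
reordering `σ(e_1) < ⋯ < σ(e_n)` of the ground set; its `i`-th letter records the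
rank increase `ρ({σ(e_1),…,σ(e_i)}) - ρ({σ(e_1),…,σ(e_{i-1})})`. -/
noncomputable def lam {n : ℕ} (M : Matroid (Fin n)) (σ : Equiv.Perm (Fin n)) :
    Fin n → Bool :=
  fun i => decide
    (matRk M (⇑σ '' {j : Fin n | j < i}) < matRk M (⇑σ '' {j : Fin n | j ≤ i}))


set_option linter.unusedSectionVars false
set_option linter.unusedVariables false

section Foundations
variable {α : Type*} [Fintype α] {M : Matroid α} {X Y I : Set α} {x : α}

lemma matRk_bddAbove (M : Matroid α) (X : Set α) :
    BddAbove {k : ℕ | ∃ I : Set α, I ⊆ X ∧ M.Indep I ∧ I.ncard = k} := by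
  refine ⟨Fintype.card α, fun k hk => ?_⟩
  obtain ⟨I, -, -, rfl⟩ := hk
  calc I.ncard ≤ (Set.univ : Set α).ncard := Set.ncard_le_ncard (Set.subset_univ I) Set.finite_univ
    _ = Fintype.card α := by simp [Set.ncard_univ]

lemma matRk_nonempty (M : Matroid α) (X : Set α) :
    Set.Nonempty {k : ℕ | ∃ I : Set α, I ⊆ X ∧ M.Indep I ∧ I.ncard = k} :=
  ⟨0, ∅, Set.empty_subset X, M.empty_indep, Set.ncard_empty α⟩

lemma le_matRk (hI : M.Indep I) (hIX : I ⊆ X) : I.ncard ≤ matRk M X :=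
  le_csSup (matRk_bddAbove M X) ⟨I, hIX, hI, rfl⟩

lemma matRk_basis (hIX : M.IsBasis I X) : matRk M X = I.ncard := by
  refine le_antisymm (csSup_le (matRk_nonempty M X) ?_) (le_matRk hIX.indep hIX.subset)
  rintro k ⟨J, hJX, hJ, rfl⟩
  obtain ⟨J', hJ', hJJ'⟩ := hJ.subset_isBasis_of_subset hJX hIX.subset_ground
  calc J.ncard ≤ J'.ncard := Set.ncard_le_ncard hJJ' (Set.toFinite J')
    _ = I.ncard := by rw [Set.ncard_def, hJ'.encard_eq_encard hIX, ← Set.ncard_def]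

lemma matRk_mono (hXY : X ⊆ Y) : matRk M X ≤ matRk M Y :=
  csSup_le_csSup (matRk_bddAbove M Y) (matRk_nonempty M X)
    (fun k ⟨I, hIX, hI, hc⟩ => ⟨I, hIX.trans hXY, hI, hc⟩)

lemma matRk_indep (hI : M.Indep I) : matRk M I = I.ncard := matRk_basis hI.isBasis_self

lemma matRk_union_closure (hX : X ⊆ M.E) (hY : Y ⊆ M.closure X) :
    matRk M (X ∪ Y) = matRk M X := by
  obtain ⟨I, hI⟩ := M.exists_isBasis X hX
  rw [matRk_basis hI]
  refine matRk_basis (hI.indep.isBasis_of_subset_of_subset_closure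
    (hI.subset.trans Set.subset_union_left) (Set.union_subset hI.subset_closure ?_))
  rwa [hI.closure_eq_closure]

lemma matRk_eq_of_subset_closure (hX : X ⊆ M.E) (hXY : X ⊆ Y) (hY : Y ⊆ M.closure X) :
    matRk M Y = matRk M X := by
  rw [← Set.union_eq_self_of_subset_left hXY, matRk_union_closure hX hY]

lemma mem_closure_of_matRk_insert (hx : x ∈ M.E) (hX : X ⊆ M.E)
    (h : matRk M (insert x X) ≤ matRk M X) : x ∈ M.closure X := by
  by_contra hxc
  obtain ⟨I, hI⟩ := M.exists_isBasis X hX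
  have hxI : x ∉ M.closure I := by rwa [hI.closure_eq_closure]
  have hind : M.Indep (insert x I) := by
    rw [hI.indep.insert_indep_iff]
    exact Or.inl ⟨hx, hxI⟩
  have hxI' : x ∉ I := fun hm => hxI (M.subset_closure I hI.indep.subset_ground hm)
  have := le_matRk hind (Set.insert_subset_insert hI.subset)
  rw [Set.ncard_insert_of_notMem hxI' (Set.toFinite I)] at this
  have h2 : matRk M X = I.ncard := matRk_basis hI
  omega

lemma not_mem_closure_of_matRk_lt (hX : X ⊆ M.E)
    (h : matRk M X < matRk M (insert x X)) : x ∉ M.closure X := by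
  intro hx
  have := matRk_union_closure hX (Y := {x}) (by simpa using hx)
  rw [Set.union_singleton] at this
  omega

end Foundations


lemma mem_downset_iff {m : ℕ} (S : Finset (Fin m))
    (hS : ∀ x ∈ S, ∀ y, y ≤ x → y ∈ S) (x : Fin m) :
    x ∈ S ↔ (x : ℕ) < S.card := by
  constructor
  · intro hx
    have h1 : Finset.Iic x ⊆ S := fun y hy => hS x hx y (Finset.mem_Iic.mp hy)
    have := Finset.card_le_card h1
    rw [Fin.card_Iic] at this
    omega
  · intro hx
    by_contra hxS
    have h1 : S ⊆ Finset.Iio x := by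
      intro y hy
      rw [Finset.mem_Iio]
      by_contra hxy
      exact hxS (hS y hy x (le_of_not_gt hxy))
    have := Finset.card_le_card h1
    rw [Fin.card_Iio] at this
    omega

lemma orderEmb_lt_iff {n m : ℕ} (s : Finset (Fin n)) (h : s.card = m) (t : ℕ) (j : Fin m) :
    ((s.orderEmbOfFin h j : Fin n) : ℕ) < t ↔
      (j : ℕ) < (s.filter (fun (x : Fin n) => (x : ℕ) < t)).card := by
  set e := s.orderEmbOfFin h with he
  set F : Finset (Fin m) := Finset.univ.filter (fun i => ((e i : Fin n) : ℕ) < t) with hF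
  have hdown : ∀ x ∈ F, ∀ y, y ≤ x → y ∈ F := by
    intro x hx y hxy
    simp only [hF, Finset.mem_filter, Finset.mem_univ, true_and] at hx ⊢
    exact lt_of_le_of_lt (show ((e y : Fin n) : ℕ) ≤ ((e x : Fin n) : ℕ) from e.monotone hxy) hx
  have hcard : F.card = (s.filter (fun (x : Fin n) => (x : ℕ) < t)).card := by
    rw [← Finset.card_image_of_injective F e.injective]
    congr 1
    ext x
    simp only [Finset.mem_image, hF, Finset.mem_filter, Finset.mem_univ, true_and]
    constructor
    · rintro ⟨i, hi, rfl⟩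
      exact ⟨Finset.orderEmbOfFin_mem s h i, hi⟩
    · rintro ⟨hxs, hxt⟩
      have : x ∈ Set.range e := by rw [he, Finset.range_orderEmbOfFin]; exact hxs
      obtain ⟨i, rfl⟩ := this
      exact ⟨i, hxt, rfl⟩
  rw [← hcard]
  have := mem_downset_iff F hdown j
  simp only [hF, Finset.mem_filter, Finset.mem_univ, true_and] at this
  exact this

lemma card_filter_lt_univ (n t : ℕ) :
    (Finset.univ.filter (fun y : Fin n => (y : ℕ) < t)).card = min t n := by
  rw [← Finset.card_range (min t n), ← Finset.card_image_of_injective _ Fin.val_injective]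
  congr 1
  ext x
  simp only [Finset.mem_image, Finset.mem_filter, Finset.mem_univ, true_and, Finset.mem_range]
  constructor
  · rintro ⟨i, hi, rfl⟩; omega
  · intro hx
    exact ⟨⟨x, by omega⟩, by simpa using (by omega : x < t), rfl⟩

lemma card_filter_add_compl {n : ℕ} (s : Finset (Fin n)) (t : ℕ) (ht : t ≤ n) :
    (s.filter (fun (x : Fin n) => (x : ℕ) < t)).card + (sᶜ.filter (fun (x : Fin n) => (x : ℕ) < t)).card = t := by
  have h := Finset.card_filter_add_card_filter_not
    (s := Finset.univ.filter (fun y : Fin n => (y : ℕ) < t)) (p := fun x => x ∈ s)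
  rw [card_filter_lt_univ] at h
  have h1 : ((Finset.univ.filter (fun y : Fin n => (y : ℕ) < t)).filter (fun x => x ∈ s))
      = s.filter (fun (x : Fin n) => (x : ℕ) < t) := by
    ext x; simp [and_comm]
  have h2 : ((Finset.univ.filter (fun y : Fin n => (y : ℕ) < t)).filter (fun x => ¬ x ∈ s))
      = sᶜ.filter (fun (x : Fin n) => (x : ℕ) < t) := by
    ext x; simp [and_comm]
  rw [h1, h2] at h
  omega

section Greedy
variable {n : ℕ} {M : Matroid (Fin n)}

lemma insert_pref (x : Fin n) :
    insert x {j : Fin n | (j : ℕ) < (x : ℕ)} = {j : Fin n | (j : ℕ) < (x : ℕ) + 1} := by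
  ext j
  simp only [Set.mem_insert_iff, Set.mem_setOf_eq, Fin.ext_iff]
  omega

lemma lam_one_iff (M : Matroid (Fin n)) (x : Fin n) :
    lam M 1 x = true ↔
      matRk M {j : Fin n | (j : ℕ) < (x : ℕ)} < matRk M {j : Fin n | (j : ℕ) < (x : ℕ) + 1} := by
  have h1 : ⇑(1 : Equiv.Perm (Fin n)) '' {j : Fin n | j < x} = {j : Fin n | (j : ℕ) < (x : ℕ)} := by
    simp only [Equiv.Perm.coe_one, Set.image_id]; rfl
  have h2 : ⇑(1 : Equiv.Perm (Fin n)) '' {j : Fin n | j ≤ x} =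
      {j : Fin n | (j : ℕ) < (x : ℕ) + 1} := by
    simp only [Equiv.Perm.coe_one, Set.image_id]
    ext j
    simp only [Set.mem_setOf_eq, Fin.le_def]
    omega
  rw [lam, h1, h2, decide_eq_true_iff]

lemma lam_mem_ones_iff (M : Matroid (Fin n)) (x : Fin n) :
    x ∈ ones (lam M 1) ↔
      matRk M {j : Fin n | (j : ℕ) < (x : ℕ)} < matRk M {j : Fin n | (j : ℕ) < (x : ℕ) + 1} := by
  rw [ones, Finset.mem_filter]
  simpa using lam_one_iff M x

lemma span_pref (M : Matroid (Fin n)) (hE : M.E = Set.univ) (t : ℕ) :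
    {j : Fin n | (j : ℕ) < t} ⊆
      M.closure ↑((ones (lam M 1)).filter (fun x : Fin n => (x : ℕ) < t)) := by
  induction t with
  | zero => intro x hx; simp at hx
  | succ t ih =>
    intro x hx
    have hsub : M.closure ↑((ones (lam M 1)).filter (fun x : Fin n => (x : ℕ) < t)) ⊆
        M.closure ↑((ones (lam M 1)).filter (fun x : Fin n => (x : ℕ) < t + 1)) := by
      apply M.closure_subset_closure
      intro y hy
      simp only [Finset.coe_filter, Set.mem_setOf_eq] at hy ⊢
      exact ⟨hy.1, by omega⟩
    rcases lt_or_eq_of_le (Nat.lt_succ_iff.mp hx) with h | h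
    · exact hsub (ih h)
    · subst h
      by_cases hxA : x ∈ ones (lam M 1)
      · apply M.subset_closure _ (by rw [hE]; exact Set.subset_univ _)
        simp only [Finset.coe_filter, Set.mem_setOf_eq]
        exact ⟨hxA, by omega⟩
      · have hno : ¬ (matRk M {j : Fin n | (j : ℕ) < (x : ℕ)} <
            matRk M {j : Fin n | (j : ℕ) < (x : ℕ) + 1}) := by
          rw [← lam_mem_ones_iff]; exact hxA
        have hle : matRk M (insert x {j : Fin n | (j : ℕ) < (x : ℕ)}) ≤
            matRk M {j : Fin n | (j : ℕ) < (x : ℕ)} := by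
          rw [insert_pref]; omega
        have hcl : x ∈ M.closure {j : Fin n | (j : ℕ) < (x : ℕ)} :=
          mem_closure_of_matRk_insert (by rw [hE]; trivial) (by rw [hE]; exact Set.subset_univ _) hle
        have hsub2 : M.closure {j : Fin n | (j : ℕ) < (x : ℕ)} ⊆
            M.closure ↑((ones (lam M 1)).filter (fun y : Fin n => (y : ℕ) < (x : ℕ))) := by
          rw [← M.closure_closure ↑((ones (lam M 1)).filter (fun y : Fin n => (y : ℕ) < (x : ℕ)))]
          exact M.closure_subset_closure ih
        exact hsub (hsub2 hcl)

end Greedy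

/-- Let `M(S)` be a rank-`r` matroid on the `n`-element linearly ordered
set `Fin n`, with distinguished word `w_{M(S)} = λ_M(1)`.  If `v ≤ w_{M(S)}` in `W(n,r)`
then `λ_M(σ_{A,B}) = v`, where `A = π(w_{M(S)})`, `B = π(v)` and `σ_{A,B}` is the
shuffle: the unique permutation mapping `B` onto `A` (and its complement onto the
complement of `A`) order-preservingly on both parts. -/

lemma orderEmbOfFin_cast {α : Type*} [LinearOrder α] (s : Finset α) {m m' : ℕ}
    (h : s.card = m) (h' : s.card = m') (i : ℕ) (hi : i < m) (hi' : i < m') :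
    s.orderEmbOfFin h ⟨i, hi⟩ = s.orderEmbOfFin h' ⟨i, hi'⟩ := by
  subst h; subst h'; rfl

theorem lam_shuffle_eq {n r : ℕ} (M : Matroid (Fin n)) (hE : M.E = Set.univ)
    (hr : ∃ B : Set (Fin n), M.IsBase B ∧ B.ncard = r)
    (v : Fin n → Bool) (hvr : (ones v).card = r)
    (hvw : wordLE v (lam M 1))
    (σ : Equiv.Perm (Fin n))
    (hmap : ⇑σ '' (↑(ones v) : Set (Fin n)) = ↑(ones (lam M 1)))
    (hmono : ∀ x ∈ ones v, ∀ y ∈ ones v, x ≤ y → σ x ≤ σ y)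
    (hmap' : ⇑σ '' (↑(ones v) : Set (Fin n))ᶜ = (↑(ones (lam M 1)) : Set (Fin n))ᶜ)
    (hmono' : ∀ x ∉ ones v, ∀ y ∉ ones v, x ≤ y → σ x ≤ σ y) :
    lam M σ = v := by
  classical
  have hground : ∀ X : Set (Fin n), X ⊆ M.E := fun X => by rw [hE]; exact Set.subset_univ _
  have hmemE : ∀ x : Fin n, x ∈ M.E := fun x => by rw [hE]; trivial
  set w := lam M 1 with hw
  set B := ones v with hB0
  set A := ones w with hA0
  have hABcard : A.card = B.card := hvw.1.symm
  have hccard : Aᶜ.card = Bᶜ.card := by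
    rw [Finset.card_compl, Finset.card_compl, hABcard]
  set b := B.orderEmbOfFin (rfl : B.card = B.card) with hb0
  set a := A.orderEmbOfFin hABcard with ha0
  set bc := Bᶜ.orderEmbOfFin (rfl : Bᶜ.card = Bᶜ.card) with hbc0
  set ac := Aᶜ.orderEmbOfFin hccard with hac0
  -- the shuffle sends the j-th element of B to the j-th element of A
  have hσb : ∀ j : Fin B.card, σ (b j) = a j := by
    have hfs : ∀ j : Fin B.card, σ (b j) ∈ A := by
      intro j
      have hbj : (b j : Fin n) ∈ (↑B : Set (Fin n)) := Finset.orderEmbOfFin_mem _ _ j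
      have : σ (b j) ∈ ⇑σ '' (↑B : Set (Fin n)) := ⟨b j, hbj, rfl⟩
      rw [hmap] at this
      exact this
    have hsm : StrictMono (fun j : Fin B.card => σ (b j)) := by
      intro i j hij
      have h1 : (b i : Fin n) < b j := b.strictMono hij
      have h2 : σ (b i) ≤ σ (b j) :=
        hmono _ (Finset.orderEmbOfFin_mem _ _ i) _ (Finset.orderEmbOfFin_mem _ _ j) h1.le
      exact lt_of_le_of_ne h2 (fun hcon => absurd (σ.injective hcon) h1.ne)
    have := Finset.orderEmbOfFin_unique hABcard hfs hsm
    intro j; exact congrFun this j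
  -- the shuffle sends the j-th element of Bᶜ to the j-th element of Aᶜ
  have hσbc : ∀ j : Fin Bᶜ.card, σ (bc j) = ac j := by
    have hfs : ∀ j : Fin Bᶜ.card, σ (bc j) ∈ Aᶜ := by
      intro j
      have hbj : (bc j : Fin n) ∈ Bᶜ := Finset.orderEmbOfFin_mem _ _ j
      have hbj' : (bc j : Fin n) ∈ (↑B : Set (Fin n))ᶜ := by
        simpa using Finset.mem_compl.mp hbj
      have : σ (bc j) ∈ ⇑σ '' (↑B : Set (Fin n))ᶜ := ⟨bc j, hbj', rfl⟩
      rw [hmap'] at this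
      simpa [Finset.mem_compl] using this
    have hsm : StrictMono (fun j : Fin Bᶜ.card => σ (bc j)) := by
      intro i j hij
      have h1 : (bc i : Fin n) < bc j := bc.strictMono hij
      have hmi : (bc i : Fin n) ∉ B := Finset.mem_compl.mp (Finset.orderEmbOfFin_mem _ _ i)
      have hmj : (bc j : Fin n) ∉ B := Finset.mem_compl.mp (Finset.orderEmbOfFin_mem _ _ j)
      have h2 : σ (bc i) ≤ σ (bc j) := hmono' _ hmi _ hmj h1.le
      exact lt_of_le_of_ne h2 (fun hcon => absurd (σ.injective hcon) h1.ne)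
    have := Finset.orderEmbOfFin_unique hccard hfs hsm
    intro j; exact congrFun this j
  -- the family of initial segments of A
  set AF : ℕ → Finset (Fin n) :=
    fun k => (Finset.univ.filter (fun j : Fin B.card => (j : ℕ) < k)).image
      (fun j => (a j : Fin n)) with hAF
  have hAFmem : ∀ (k : ℕ) (x : Fin n),
      x ∈ AF k ↔ ∃ j : Fin B.card, (j : ℕ) < k ∧ (a j : Fin n) = x := by
    intro k x
    simp [hAF]
  have hAFcard : ∀ k, (AF k).card = min k B.card := by
    intro k
    rw [hAF]
    rw [Finset.card_image_of_injective _ (fun x y hxy => a.injective hxy)]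
    exact card_filter_lt_univ _ _
  have hAFindep : ∀ k, M.Indep ↑(AF k) := by
    intro k
    induction k with
    | zero =>
      have : AF 0 = ∅ := by
        ext x; simp [hAFmem]
      rw [this]; simpa using M.empty_indep
    | succ k ih =>
      by_cases hk : k < B.card
      · have hins : AF (k + 1) = insert (a ⟨k, hk⟩ : Fin n) (AF k) := by
          ext x
          simp only [hAFmem, Finset.mem_insert]
          constructor
          · rintro ⟨j, hj, rfl⟩
            rcases Nat.lt_succ_iff_lt_or_eq.mp hj with h | h
            · exact Or.inr ⟨j, h, rfl⟩
            · exact Or.inl (by congr 1; exact Fin.ext h)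
          · rintro (rfl | ⟨j, hj, rfl⟩)
            · exact ⟨⟨k, hk⟩, by simp, rfl⟩
            · exact ⟨j, by omega, rfl⟩
        have hmemA : (a ⟨k, hk⟩ : Fin n) ∈ A := Finset.orderEmbOfFin_mem _ _ _
        have hlt : matRk M {j : Fin n | (j : ℕ) < ((a ⟨k, hk⟩ : Fin n) : ℕ)} <
            matRk M {j : Fin n | (j : ℕ) < ((a ⟨k, hk⟩ : Fin n) : ℕ) + 1} :=
          (lam_mem_ones_iff M _).mp (by rwa [← hw, ← hA0])
        have hnotin : (a ⟨k, hk⟩ : Fin n) ∉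
            M.closure {j : Fin n | (j : ℕ) < ((a ⟨k, hk⟩ : Fin n) : ℕ)} := by
          apply not_mem_closure_of_matRk_lt (hground _)
          rwa [insert_pref]
        have hsub : ↑(AF k) ⊆ {j : Fin n | (j : ℕ) < ((a ⟨k, hk⟩ : Fin n) : ℕ)} := by
          intro x hx
          rw [Finset.mem_coe, hAFmem] at hx
          obtain ⟨j, hj, rfl⟩ := hx
          exact a.strictMono (show j < ⟨k, hk⟩ from hj)
        have hnotin' : (a ⟨k, hk⟩ : Fin n) ∉ M.closure ↑(AF k) :=
          fun hc => hnotin (M.closure_subset_closure hsub hc)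
        rw [hins, Finset.coe_insert]
        rw [ih.insert_indep_iff]
        exact Or.inl ⟨hmemE _, hnotin'⟩
      · have : AF (k + 1) = AF k := by
          ext x
          simp only [hAFmem]
          constructor
          · rintro ⟨j, hj, rfl⟩; exact ⟨j, by have := j.isLt; omega, rfl⟩
          · rintro ⟨j, hj, rfl⟩; exact ⟨j, by omega, rfl⟩
        rwa [this]
  -- the key rank computation
  have key : ∀ t : ℕ, t ≤ n → matRk M (⇑σ '' {j : Fin n | (j : ℕ) < t}) =
      (B.filter (fun x : Fin n => (x : ℕ) < t)).card := by
    intro t ht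
    set k := (B.filter (fun x : Fin n => (x : ℕ) < t)).card with hk
    have hkB : k ≤ B.card := Finset.card_filter_le _ _
    -- lower bound
    have hAFsub : ↑(AF k) ⊆ ⇑σ '' {j : Fin n | (j : ℕ) < t} := by
      intro x hx
      rw [Finset.mem_coe, hAFmem] at hx
      obtain ⟨j, hj, rfl⟩ := hx
      refine ⟨b j, ?_, hσb j⟩
      show ((b j : Fin n) : ℕ) < t
      exact (orderEmb_lt_iff B rfl t j).mpr hj
    have hlow : k ≤ matRk M (⇑σ '' {j : Fin n | (j : ℕ) < t}) := by
      have h1 := le_matRk (hAFindep k) hAFsub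
      rw [Set.ncard_coe_finset, hAFcard k] at h1
      omega
    -- upper bound
    have hup : ⇑σ '' {j : Fin n | (j : ℕ) < t} ⊆ M.closure ↑(AF k) := by
      rintro y ⟨x, hx, rfl⟩
      simp only [Set.mem_setOf_eq] at hx
      by_cases hxB : x ∈ B
      · obtain ⟨j, rfl⟩ : ∃ j, (b j : Fin n) = x := by
          have : x ∈ Set.range ⇑b := by
            rw [hb0, Finset.range_orderEmbOfFin]; exact hxB
          exact this
        have hj : (j : ℕ) < k := (orderEmb_lt_iff B rfl t j).mp hx
        rw [hσb j]
        exact M.subset_closure _ (hground _) ((hAFmem k _).mpr ⟨j, hj, rfl⟩)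
      · obtain ⟨j, rfl⟩ : ∃ j, (bc j : Fin n) = x := by
          have : x ∈ Set.range ⇑bc := by
            rw [hbc0, Finset.range_orderEmbOfFin]
            exact Finset.mem_compl.mpr hxB
          exact this
        have hjkc : (j : ℕ) < (Bᶜ.filter (fun x : Fin n => (x : ℕ) < t)).card :=
          (orderEmb_lt_iff Bᶜ rfl t j).mp hx
        rw [hσbc j]
        set c := ((ac j : Fin n) : ℕ) with hc
        have hyA : (ac j : Fin n) ∉ A := Finset.mem_compl.mp (Finset.orderEmbOfFin_mem _ _ j)
        have hspan : (ac j : Fin n) ∈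
            M.closure ↑(A.filter (fun z : Fin n => (z : ℕ) < c + 1)) := by
          have := span_pref M hE (c + 1)
          rw [← hw, ← hA0] at this
          exact this (by simp; omega)
        have hfe : A.filter (fun z : Fin n => (z : ℕ) < c + 1) =
            A.filter (fun z : Fin n => (z : ℕ) < c) := by
          ext z
          simp only [Finset.mem_filter, and_congr_right_iff]
          intro hzA
          constructor
          · intro h1
            rcases Nat.lt_succ_iff_lt_or_eq.mp h1 with h2 | h2
            · exact h2
            · exact absurd (Fin.ext h2 ▸ hzA) hyA
          · omega
        rw [hfe] at hspan
        -- counting: the number of elements of A below c is at most k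
        have hmk : (A.filter (fun z : Fin n => (z : ℕ) < c)).card ≤ k := by
          rcases le_or_gt B.card k with hbk | hkr
          · exact le_trans (le_trans (Finset.card_filter_le _ _) hABcard.le) hbk
          · by_contra hmk'
            push_neg at hmk'
            have hak : ((a ⟨k, hkr⟩ : Fin n) : ℕ) < c :=
              (orderEmb_lt_iff A hABcard c ⟨k, hkr⟩).mpr hmk'
            set α := ((a ⟨k, hkr⟩ : Fin n) : ℕ) with hα
            have h1 : (A.filter (fun z : Fin n => (z : ℕ) < α)).card = k := by
              set m' := (A.filter (fun z : Fin n => (z : ℕ) < α)).card with hm'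
              have hm'B : m' ≤ B.card := le_trans (Finset.card_filter_le _ _) hABcard.le
              have hiff : ∀ i : Fin B.card, ((i : ℕ) < m' ↔ (i : ℕ) < k) := by
                intro i
                rw [← orderEmb_lt_iff A hABcard α i]
                rw [show (((a i : Fin n) : ℕ) < α ↔ (a i : Fin n) < a ⟨k, hkr⟩) from Iff.rfl]
                rw [a.lt_iff_lt]
                exact Iff.rfl
              rcases lt_trichotomy m' k with h | h | h
              · have := hiff ⟨m', lt_of_lt_of_le h hkr.le⟩
                simp only [Fin.val_mk] at this
                omega
              · exact h
              · have := hiff ⟨k, hkr⟩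
                simp only [Fin.val_mk] at this
                omega
            have h2 : (Aᶜ.filter (fun z : Fin n => (z : ℕ) < α)).card ≤ (j : ℕ) := by
              by_contra h2'
              push_neg at h2'
              have := (orderEmb_lt_iff Aᶜ hccard α j).mpr h2'
              rw [← hac0] at this
              omega
            have h3 := card_filter_add_compl A α (le_of_lt (a ⟨k, hkr⟩).isLt)
            rw [h1] at h3
            have h4 := card_filter_add_compl B t ht
            have h5 : ¬ (((b ⟨k, hkr⟩ : Fin n) : ℕ) < t) := by
              rw [orderEmb_lt_iff B rfl t ⟨k, hkr⟩]
              simp only [Fin.val_mk]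
              omega
            have h6 : ((b ⟨k, hkr⟩ : Fin n) : ℕ) ≤ ((a ⟨k, hkr⟩ : Fin n) : ℕ) := by
              have hkv : k < (ones v).card := by rw [← hB0]; exact hkr
              have hkw : k < (ones (lam M 1)).card := by
                rw [← hw, ← hA0, hABcard]; exact hkr
              have h7 := hvw.2 k hkv hkw
              have e1 : (ones v).orderEmbOfFin rfl ⟨k, hkv⟩ = b ⟨k, hkr⟩ :=
                orderEmbOfFin_cast _ _ _ k hkv hkr
              have e2 : (ones (lam M 1)).orderEmbOfFin rfl ⟨k, hkw⟩ = a ⟨k, hkr⟩ :=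
                orderEmbOfFin_cast _ _ _ k hkw hkr
              rw [e1, e2] at h7
              exact h7
            omega
        have hsubAF : ↑(A.filter (fun z : Fin n => (z : ℕ) < c)) ⊆ (↑(AF k) : Set (Fin n)) := by
          intro z hz
          rw [Finset.mem_coe, Finset.mem_filter] at hz
          obtain ⟨hzA, hzc⟩ := hz
          obtain ⟨i, rfl⟩ : ∃ i, (a i : Fin n) = z := by
            have : z ∈ Set.range ⇑a := by
              rw [ha0, Finset.range_orderEmbOfFin]; exact hzA
            exact this
          have hi : (i : ℕ) < (A.filter (fun z : Fin n => (z : ℕ) < c)).card :=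
            (orderEmb_lt_iff A hABcard c i).mp hzc
          exact Finset.mem_coe.mpr ((hAFmem k _).mpr ⟨i, lt_of_lt_of_le hi hmk, rfl⟩)
        exact M.closure_subset_closure hsubAF (hspan)
    have hupR : matRk M (⇑σ '' {j : Fin n | (j : ℕ) < t}) ≤ k := by
      have h1 : matRk M (↑(AF k) ∪ ⇑σ '' {j : Fin n | (j : ℕ) < t}) = matRk M ↑(AF k) :=
        matRk_union_closure (hground _) hup
      have h2 : matRk M (⇑σ '' {j : Fin n | (j : ℕ) < t}) ≤
          matRk M (↑(AF k) ∪ ⇑σ '' {j : Fin n | (j : ℕ) < t}) :=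
        matRk_mono Set.subset_union_right
      rw [h1, matRk_indep (hAFindep k), Set.ncard_coe_finset, hAFcard] at h2
      omega
    omega
  -- assemble
  funext i
  have hset1 : {j : Fin n | j < i} = {j : Fin n | (j : ℕ) < (i : ℕ)} := rfl
  have hset2 : {j : Fin n | j ≤ i} = {j : Fin n | (j : ℕ) < (i : ℕ) + 1} := by
    ext j
    simp only [Set.mem_setOf_eq, Fin.le_def]
    omega
  have k1 := key (i : ℕ) (le_of_lt i.isLt)
  have k2 := key ((i : ℕ) + 1) i.isLt
  rw [lam, hset1, hset2, k1, k2]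
  by_cases hiB : i ∈ B
  · have hsp : B.filter (fun x : Fin n => (x : ℕ) < (i : ℕ) + 1) =
        insert i (B.filter (fun x : Fin n => (x : ℕ) < (i : ℕ))) := by
      ext z
      simp only [Finset.mem_filter, Finset.mem_insert]
      constructor
      · rintro ⟨hzB, hz⟩
        rcases Nat.lt_succ_iff_lt_or_eq.mp hz with h | h
        · exact Or.inr ⟨hzB, h⟩
        · exact Or.inl (Fin.ext h)
      · rintro (rfl | ⟨hzB, hz⟩)
        · exact ⟨hiB, by omega⟩
        · exact ⟨hzB, by omega⟩
    have hni : i ∉ B.filter (fun x : Fin n => (x : ℕ) < (i : ℕ)) := by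
      simp
    rw [hsp, Finset.card_insert_of_notMem hni]
    have hvi : v i = true := by
      have := hiB
      rw [hB0, ones, Finset.mem_filter] at this
      exact this.2
    simp [hvi]
  · have hsp : B.filter (fun x : Fin n => (x : ℕ) < (i : ℕ) + 1) =
        B.filter (fun x : Fin n => (x : ℕ) < (i : ℕ)) := by
      ext z
      simp only [Finset.mem_filter, and_congr_right_iff]
      intro hzB
      constructor
      · intro hz
        rcases Nat.lt_succ_iff_lt_or_eq.mp hz with h | h
        · exact h
        · exact absurd (Fin.ext h ▸ hzB) hiB
      · omega
    rw [hsp]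
    have hvi : v i = false := by
      by_contra hcon
      exact hiB (by rw [hB0, ones, Finset.mem_filter]; exact ⟨Finset.mem_univ i, by simpa using hcon⟩)
    simp [hvi]
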